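/- For a compact connected metrizable abelian group G, the exponential map exp_G : L(G) → G is surjective if and only if it is an open map. -/

import Mathlib

open Topology Filter Set Pointwise
set_option linter.unusedSectionVars false
set_option maxHeartbeats 1000000

namespace ExpOpenAux

variable {G : Type*} [AddCommGroup G] [TopologicalSpace G] [IsTopologicalAddGroup G]

/-- Homomorphisms mapping `[-1,1]` into `W`. -/
def BB (G : Type*) [AddCommGroup G] [TopologicalSpace G] (W : Set G) :
    Set (ContinuousAddMonoidHom ℝ G) :=
  {f | ∀ t ∈ Icc (-1 : ℝ) 1, f t ∈ W}

/-- Evaluation as an additive monoid hom. -/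
def ev (t : ℝ) :
    ContinuousAddMonoidHom ℝ G →+ G where
  toFun f := f t
  map_zero' := rfl
  map_add' _ _ := rfl

lemma zero_mem_BB {W : Set G} (hW : (0 : G) ∈ W) : (0 : ContinuousAddMonoidHom ℝ G) ∈ BB G W :=
  fun _ _ => hW

lemma BB_mono {W W' : Set G} (h : W ⊆ W') : BB G W ⊆ BB G W' :=
  fun _ hf t ht => h (hf t ht)

lemma sub_mem_BB {W W' : Set G} {f g : ContinuousAddMonoidHom ℝ G}
    (hf : f ∈ BB G W) (hg : g ∈ BB G W') : f - g ∈ BB G (W - W') := by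
  intro t ht
  have h : (f - g) t = f t - g t := (ev (G := G) t).map_sub f g
  rw [h]
  exact Set.sub_mem_sub (hf t ht) (hg t ht)

lemma closure_subset_add {A V : Set G} (hV : V ∈ 𝓝 (0 : G)) : closure A ⊆ A + V := by
  intro x hx
  have hN : {y : G | x - y ∈ V} ∈ 𝓝 x := by
    have hc : Continuous fun y : G => x - y := continuous_const.sub continuous_id
    have : (fun y : G => x - y) ⁻¹' V ∈ 𝓝 x := by
      apply hc.continuousAt.preimage_mem_nhds
      simpa using hV
    exact this
  rcases mem_closure_iff_nhds.1 hx _ hN with ⟨a, ha, haA⟩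
  have : x = a + (x - a) := by abel
  rw [this]
  exact Set.add_mem_add haA ha

variable [CompactSpace G] [T2Space G] [TopologicalSpace.MetrizableSpace G]

/-- `BB W` is open when `W` is open. -/
lemma isOpen_BB {W : Set G} (hW : IsOpen W) : IsOpen (BB G W) := by
  have h1 : IsOpen {φ : C(ℝ, G) | MapsTo φ (Icc (-1 : ℝ) 1) W} :=
    ContinuousMap.isOpen_setOf_mapsTo isCompact_Icc hW
  have h2 : BB G W = (ContinuousAddMonoidHom.toContinuousMap) ⁻¹'
      {φ : C(ℝ, G) | MapsTo φ (Icc (-1 : ℝ) 1) W} := rfl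
  rw [h2]
  exact h1.preimage (ContinuousAddMonoidHom.isInducing_toContinuousMap ℝ G).continuous

/-- Neighborhood basis of `0` in `L(G)` given by the sets `BB W`. -/
lemma exists_BB_subset {S : Set (ContinuousAddMonoidHom ℝ G)}
    (hS : S ∈ 𝓝 (0 : ContinuousAddMonoidHom ℝ G)) :
    ∃ W ∈ 𝓝 (0 : G), BB G W ⊆ S := by
  letI : UniformSpace G := IsTopologicalAddGroup.rightUniformSpace G
  haveI : IsUniformAddGroup G := isUniformAddGroup_of_addCommGroup
  have hind := (ContinuousAddMonoidHom.isInducing_toContinuousMap ℝ G).nhds_eq_comap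
    (0 : ContinuousAddMonoidHom ℝ G)
  have h0 : (0 : ContinuousAddMonoidHom ℝ G).toContinuousMap = (0 : C(ℝ, G)) := rfl
  rw [hind, h0] at hS
  rcases hS with ⟨S', hS', hSS⟩
  rw [nhds_eq_comap_uniformity] at hS'
  rcases (ContinuousMap.hasBasis_compactConvergenceUniformity.comap
      (Prod.mk (0 : C(ℝ, G)))).mem_iff.1 hS' with ⟨⟨K, V⟩, ⟨hK, hV⟩, hKV⟩
  rw [uniformity_eq_comap_nhds_zero'] at hV
  rcases hV with ⟨W₁, hW₁, hW₁V⟩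
  rcases hK.isBounded.subset_closedBall 0 with ⟨r, hr⟩
  set n : ℕ := ⌈r⌉₊ + 1 with hn
  have hcont : Continuous fun x : G => n • x := continuous_nsmul n
  refine ⟨(fun x : G => n • x) ⁻¹' W₁, ?_, ?_⟩
  · apply hcont.continuousAt.preimage_mem_nhds
    simpa using hW₁
  · intro f hf
    apply hSS
    apply hKV
    intro x hx
    apply hW₁V
    show f x + -(0 : C(ℝ, G)) x ∈ W₁
    rw [← sub_eq_add_neg]
    have hxr : |x| ≤ (n : ℝ) := by
      have := hr hx
      simp only [Metric.mem_closedBall, Real.dist_eq, sub_zero] at this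
      have h1 : r ≤ (n : ℝ) := by
        calc r ≤ (⌈r⌉₊ : ℝ) := Nat.le_ceil r
        _ ≤ (n : ℝ) := by exact_mod_cast Nat.le_succ _
      linarith
    have hn0 : (n : ℝ) ≠ 0 := by positivity
    have hfx : f x = n • f (x / n) := by
      have : (n : ℕ) • (x / (n : ℝ)) = x := by
        rw [nsmul_eq_mul]
        field_simp
      conv_lhs => rw [← this]
      exact map_nsmul f n (x / n)
    have habs : |x / (n : ℝ)| ≤ 1 := by
      rw [abs_div, abs_of_nonneg (by positivity : (0:ℝ) ≤ (n:ℝ)), div_le_one (by positivity)]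
      exact hxr
    have hmem : f (x / n) ∈ (fun x : G => n • x) ⁻¹' W₁ := by
      apply hf
      rcases abs_le.1 habs with ⟨h1, h2⟩
      exact ⟨h1, h2⟩
    simpa [hfx] using hmem


/-- Baire category step: if `exp` is surjective then `closure (exp '' BB W)` is a
neighborhood of `0` for every `W ∈ 𝓝 0`. -/
lemma keyA (hsurj : Function.Surjective (fun f : ContinuousAddMonoidHom ℝ G => f 1))
    {W : Set G} (hW : W ∈ 𝓝 (0 : G)) :
    (0 : G) ∈ interior (closure ((fun f : ContinuousAddMonoidHom ℝ G => f 1) '' BB G W)) := by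
  classical
  set e : ContinuousAddMonoidHom ℝ G → G := fun f => f 1 with he
  -- a small open symmetric-ish neighborhood
  rcases exists_nhds_zero_half hW with ⟨V, hV, hVW⟩
  have hnegV : -V ∈ 𝓝 (0 : G) := by
    have : Continuous fun x : G => -x := continuous_neg
    simpa using this.continuousAt.preimage_mem_nhds (by simpa using hV)
  set W₂ : Set G := interior (V ∩ -V) with hW₂def
  have hW₂nhds : W₂ ∈ 𝓝 (0 : G) := interior_mem_nhds.2 (Filter.inter_mem hV hnegV)
  have hW₂open : IsOpen W₂ := isOpen_interior
  have hW₂sub : W₂ - W₂ ⊆ W := by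
    rintro x ⟨a, ha, b, hb, rfl⟩
    have ha' : a ∈ V := (interior_subset ha).1
    have hb' : -b ∈ V := by
      have := (interior_subset hb).2
      simpa using this
    have := hVW a ha' (-b) hb'
    simpa [sub_eq_add_neg] using this
  have h0W₂ : (0 : G) ∈ W₂ := mem_of_mem_nhds hW₂nhds
  -- countable dense subset of L(G)
  obtain ⟨D, hDc, hDd⟩ : ∃ D : Set (ContinuousAddMonoidHom ℝ G), D.Countable ∧ Dense D := by
    letI : MetricSpace G := TopologicalSpace.metrizableSpaceMetric G
    haveI : SecondCountableTopology (ContinuousAddMonoidHom ℝ G) :=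
      (ContinuousAddMonoidHom.isInducing_toContinuousMap ℝ G).secondCountableTopology
    exact TopologicalSpace.exists_countable_dense _
  set A : Set G := e '' BB G W₂ with hA
  -- countable closed cover of G
  have hcov : ∀ y : G, ∃ h ∈ D, y - e h ∈ A := by
    intro y
    obtain ⟨f, hf⟩ := hsurj y
    have hO : IsOpen {g : ContinuousAddMonoidHom ℝ G | f - g ∈ BB G W₂} := by
      have : {g : ContinuousAddMonoidHom ℝ G | f - g ∈ BB G W₂} =
          (fun g : ContinuousAddMonoidHom ℝ G => f - g) ⁻¹' BB G W₂ := rfl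
      rw [this]
      exact (isOpen_BB hW₂open).preimage (continuous_const.sub continuous_id)
    have hne : {g : ContinuousAddMonoidHom ℝ G | f - g ∈ BB G W₂}.Nonempty :=
      ⟨f, by simpa using zero_mem_BB h0W₂⟩
    obtain ⟨h, hhD, hh⟩ := hDd.exists_mem_open hO hne
    refine ⟨h, hhD, ?_⟩
    have : y - e h = e (f - h) := by
      rw [← hf]
      exact ((ev (G := G) 1).map_sub f h).symm
    rw [this]
    exact ⟨f - h, hh, rfl⟩
  haveI : Countable ↥D := hDc.to_subtype
  have hBaire : ∃ h : D, (interior ((fun x : G => x - e h) ⁻¹' closure A)).Nonempty := by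
    apply nonempty_interior_of_iUnion_of_closed
    · intro h
      exact isClosed_closure.preimage (continuous_id.sub continuous_const)
    · apply eq_univ_iff_forall.2
      intro y
      rcases hcov y with ⟨h, hhD, hy⟩
      exact mem_iUnion.2 ⟨⟨h, hhD⟩, subset_closure hy⟩
  obtain ⟨h, z, hz⟩ := hBaire
  have hwz : z - e (h : ContinuousAddMonoidHom ℝ G) ∈ interior (closure A) := by
    have : (fun x : G => x - e (h : ContinuousAddMonoidHom ℝ G)) ⁻¹' closure A =
        (Homeomorph.subRight (e (h : ContinuousAddMonoidHom ℝ G))) ⁻¹' closure A := rfl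
    rw [this, ← Homeomorph.preimage_interior] at hz
    exact hz
  set w : G := z - e (h : ContinuousAddMonoidHom ℝ G) with hwdef
  -- translate the interior point to 0
  have hO2 : IsOpen ((fun x : G => x - w) '' interior (closure A)) :=
    (isOpenMap_sub_right w) _ isOpen_interior
  have h02 : (0 : G) ∈ (fun x : G => x - w) '' interior (closure A) :=
    ⟨w, hwz, sub_self w⟩
  have hsub2 : ((fun x : G => x - w) '' interior (closure A)) ⊆
      closure ((fun f : ContinuousAddMonoidHom ℝ G => f 1) '' BB G W) := by
    rintro x ⟨u, hu, rfl⟩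
    have hu' : u ∈ closure A := interior_subset hu
    have hw' : w ∈ closure A := interior_subset hwz
    refine map_mem_closure₂ continuous_sub hu' hw' ?_
    intro a ha b hb
    rcases ha with ⟨f₁, hf₁, rfl⟩
    rcases hb with ⟨f₂, hf₂, rfl⟩
    have : e f₁ - e f₂ = e (f₁ - f₂) := ((ev (G := G) 1).map_sub f₁ f₂).symm
    rw [this]
    exact ⟨f₁ - f₂, BB_mono hW₂sub (sub_mem_BB hf₁ hf₂), rfl⟩
  exact interior_maximal hsub2 hO2 h02


lemma eBB_sub {W : Set G} : (fun f : ContinuousAddMonoidHom ℝ G => f 1) '' BB G W ⊆ W := by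
  rintro x ⟨f, hf, rfl⟩
  exact hf 1 ⟨by norm_num, le_refl 1⟩

/-- Main step: if `exp` is surjective, then the image of any neighborhood of `0` in `L(G)`
is a neighborhood of `0` in `G`. -/
lemma openAt0 (hsurj : Function.Surjective (fun f : ContinuousAddMonoidHom ℝ G => f 1))
    {S : Set (ContinuousAddMonoidHom ℝ G)} (hS : S ∈ 𝓝 (0 : ContinuousAddMonoidHom ℝ G)) :
    (fun f : ContinuousAddMonoidHom ℝ G => f 1) '' S ∈ 𝓝 (0 : G) := by
  classical
  letI : UniformSpace G := IsTopologicalAddGroup.rightUniformSpace G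
  haveI : IsUniformAddGroup G := isUniformAddGroup_of_addCommGroup
  set e : ContinuousAddMonoidHom ℝ G → G := fun f => f 1 with he
  obtain ⟨W₀, hW₀, hBW₀⟩ := exists_BB_subset hS
  obtain ⟨V₀, hV₀n, hV₀c, hV₀sub⟩ := exists_mem_nhds_isClosed_subset hW₀
  obtain ⟨Q, hQ⟩ := (𝓝 (0 : G)).exists_antitone_basis
  -- recursively chosen chain of neighborhoods
  have hstep : ∀ p : Set G × ℕ, ∃ B : Set G, B ∈ 𝓝 (0 : G) ∧
      (p.1 ∈ 𝓝 (0 : G) → B + B ⊆ p.1 ∩ Q p.2) := by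
    rintro ⟨A, n⟩
    by_cases hA : A ∈ 𝓝 (0 : G)
    · rcases exists_nhds_zero_half (Filter.inter_mem hA (hQ.1.mem_of_mem (by trivial : True)))
        with ⟨B, hB, hB2⟩
      refine ⟨B, hB, fun _ => ?_⟩
      rintro x ⟨u, hu, v, hv, rfl⟩
      exact hB2 u hu v hv
    · exact ⟨univ, univ_mem, fun h => absurd h hA⟩
  choose Wnext hWnext1 hWnext2 using hstep
  set Wseq : ℕ → Set G := fun n => Nat.rec V₀ (fun n Wn => Wnext (Wn, n + 1)) n with hWseqdef
  have hWsucc : ∀ n, Wseq (n + 1) = Wnext (Wseq n, n + 1) := fun n => rfl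
  have hWnhds : ∀ n, Wseq n ∈ 𝓝 (0 : G) := by
    intro n
    cases n with
    | zero => exact hV₀n
    | succ n => rw [hWsucc]; exact hWnext1 _
  have hWchain : ∀ n, Wseq (n + 1) + Wseq (n + 1) ⊆ Wseq n ∩ Q (n + 1) := by
    intro n
    rw [hWsucc]
    exact hWnext2 (Wseq n, n + 1) (hWnhds n)
  have hW0mem : ∀ n, (0 : G) ∈ Wseq n := fun n => mem_of_mem_nhds (hWnhds n)
  have hWQ : ∀ n, Wseq (n + 1) ⊆ Q (n + 1) := by
    intro n x hx
    have := hWchain n (Set.add_mem_add hx (hW0mem (n + 1)))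
    rw [add_zero] at this
    exact this.2
  -- sums of tails of the chain
  have tailsum : ∀ (n k : ℕ) (z : ℕ → G), (∀ j, j < n → z j ∈ Wseq (k + j + 1)) →
      ∑ j ∈ Finset.range n, z j ∈ Wseq k := by
    intro n
    induction n with
    | zero => intro k z _; simpa using hW0mem k
    | succ n ih =>
      intro k z hz
      rw [Finset.sum_range_succ']
      have h1 : ∑ j ∈ Finset.range n, z (j + 1) ∈ Wseq (k + 1) := by
        apply ih (k + 1)
        intro j hj
        have h := hz (j + 1) (by omega)
        rw [show (k + 1) + j + 1 = k + (j + 1) + 1 by omega]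
        exact h
      have h2 : z 0 ∈ Wseq (k + 1) := by
        have := hz 0 (Nat.succ_pos n)
        rwa [show k + 0 + 1 = k + 1 by omega] at this
      exact (hWchain k (Set.add_mem_add h1 h2)).1
  have hN : ∀ n, (0 : G) ∈ interior (closure (e '' BB G (Wseq n))) :=
    fun n => keyA hsurj (hWnhds n)
  -- the approximation step
  have hstep2 : ∀ (x : G) (n : ℕ), ∃ g : ContinuousAddMonoidHom ℝ G,
      x ∈ closure (e '' BB G (Wseq (n + 1))) →
      g ∈ BB G (Wseq (n + 1)) ∧ x - e g ∈ closure (e '' BB G (Wseq (n + 2))) := by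
    intro x n
    by_cases hx : x ∈ closure (e '' BB G (Wseq (n + 1)))
    · set T := interior (closure (e '' BB G (Wseq (n + 2)))) with hT
      have hOopen : IsOpen ((fun t => x - t) '' T) :=
        (isOpenMap_sub_left x) _ isOpen_interior
      have hxO : x ∈ (fun t => x - t) '' T := ⟨0, hN (n + 2), sub_zero x⟩
      obtain ⟨u, huO, hus⟩ := mem_closure_iff.1 hx _ hOopen hxO
      rcases huO with ⟨t, htT, hteq⟩
      rcases hus with ⟨g, hgB, hge⟩
      refine ⟨g, fun _ => ⟨hgB, ?_⟩⟩
      rw [hge]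
      have hxu : x - u ∈ T := by
        have : x - u = t := by rw [← hteq]; exact sub_sub_cancel x t
        rw [this]; exact htT
      exact interior_subset hxu
    · exact ⟨0, fun hx' => absurd hx' hx⟩
  choose gf hgf using hstep2
  -- conclude
  refine Filter.mem_of_superset (isOpen_interior.mem_nhds (hN 1)) ?_
  intro y hy
  -- iterative approximation sequences
  set rseq : ℕ → G := fun n => Nat.rec y (fun n x => x - e (gf x n)) n with hrseqdef
  have hrsucc : ∀ n, rseq (n + 1) = rseq n - e (gf (rseq n) n) := fun n => rfl
  have hr : ∀ n, rseq n ∈ closure (e '' BB G (Wseq (n + 1))) := by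
    intro n
    induction n with
    | zero => exact interior_subset hy
    | succ n ih =>
      rw [hrsucc]
      exact (hgf (rseq n) n ih).2
  set a : ℕ → ContinuousAddMonoidHom ℝ G := fun n => gf (rseq n) n with hadef
  have ha : ∀ n, a n ∈ BB G (Wseq (n + 1)) := fun n => (hgf (rseq n) n (hr n)).1
  set Ssum : ℕ → ContinuousAddMonoidHom ℝ G := fun n => ∑ j ∈ Finset.range n, a j with hSsumdef
  have hSval : ∀ (x : ℝ) (n : ℕ), (Ssum n) x = ∑ j ∈ Finset.range n, (a j) x :=
    fun x n => map_sum (ev (G := G) x) a (Finset.range n)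
  have hSy : ∀ n, (Ssum n) 1 = y - rseq n := by
    intro n
    induction n with
    | zero =>
      have h0 : Ssum 0 = 0 := Finset.sum_range_zero a
      have h1 : (Ssum 0) 1 = (0 : G) := by rw [h0]; exact map_zero (ev (G := G) 1)
      rw [h1]
      show (0 : G) = y - y
      rw [sub_self]
    | succ n ih =>
      have h1 : Ssum (n + 1) = Ssum n + a n := Finset.sum_range_succ a n
      have h2 : (Ssum (n + 1)) 1 = (Ssum n) 1 + (a n) 1 := by
        rw [h1]; exact (ev (G := G) 1).map_add (Ssum n) (a n)
      rw [h2, ih, hrsucc]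
      show y - rseq n + (a n) 1 = y - (rseq n - e (a n))
      have : e (a n) = (a n) 1 := rfl
      rw [this]; abel
  -- rseq tends to 0
  have rtend : Tendsto rseq atTop (𝓝 (0 : G)) := by
    rw [hQ.1.tendsto_right_iff]
    intro i _
    filter_upwards [eventually_ge_atTop i] with n hn
    have h1 : rseq n ∈ closure (Wseq (n + 1)) := closure_mono eBB_sub (hr n)
    have h2 : rseq n ∈ Wseq (n + 1) + Wseq (n + 1) :=
      closure_subset_add (hWnhds (n + 1)) h1
    have h3 : rseq n ∈ Q (n + 1) := (hWchain n h2).2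
    exact hQ.antitone (by omega) h3
  -- the partial sums form a Cauchy sequence in C(ℝ, G)
  have hcauchy : CauchySeq (fun n => (Ssum n).toContinuousMap) := by
    rw [ContinuousMap.hasBasis_compactConvergenceUniformity.cauchySeq_iff]
    rintro ⟨K, V⟩ ⟨hK, hV⟩
    rw [uniformity_eq_comap_nhds_zero'] at hV
    obtain ⟨W₁, hW₁, hW₁V⟩ := hV
    have hnegW₁ : -W₁ ∈ 𝓝 (0 : G) := by
      have hc : Continuous fun x : G => -x := continuous_neg
      have := hc.continuousAt.preimage_mem_nhds (x := (0 : G)) (by simpa using hW₁)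
      simpa using this
    set W₁' : Set G := W₁ ∩ -W₁ with hW₁'def
    rcases hK.isBounded.subset_closedBall 0 with ⟨r, hr⟩
    set T : ℕ := ⌈r⌉₊ + 1 with hTdef
    have hTcont : Continuous fun x : G => T • x := continuous_nsmul T
    have hpre : (fun x : G => T • x) ⁻¹' W₁' ∈ 𝓝 (0 : G) := by
      apply hTcont.continuousAt.preimage_mem_nhds
      show W₁' ∈ 𝓝 (T • (0 : G))
      rw [smul_zero]
      exact Filter.inter_mem hW₁ hnegW₁
    obtain ⟨N, -, hQN⟩ := hQ.1.mem_iff.1 hpre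
    refine ⟨N + 1, ?_⟩
    have key : ∀ m n, N + 1 ≤ n → n ≤ m → ∀ x ∈ K, (Ssum m) x - (Ssum n) x ∈ W₁' := by
      intro m n hn hnm x hx
      have hxr : |x| ≤ (T : ℝ) := by
        have := hr hx
        simp only [Metric.mem_closedBall, Real.dist_eq, sub_zero] at this
        have h1 : r ≤ (T : ℝ) := by
          calc r ≤ (⌈r⌉₊ : ℝ) := Nat.le_ceil r
          _ ≤ (T : ℝ) := by exact_mod_cast Nat.le_succ _
        linarith
      have hT0 : (T : ℝ) ≠ 0 := by positivity
      have hdiff : (Ssum m) x - (Ssum n) x = ∑ j ∈ Finset.Ico n m, (a j) x := by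
        rw [hSval x m, hSval x n]
        exact (Finset.sum_Ico_eq_sub _ hnm).symm
      have hterm : ∀ j, (a j) x = T • (a j) (x / T) := by
        intro j
        have hTx : (T : ℕ) • (x / (T : ℝ)) = x := by
          rw [nsmul_eq_mul]; field_simp
        conv_lhs => rw [← hTx]
        exact map_nsmul (a j) T (x / T)
      have hsmul : ∑ j ∈ Finset.Ico n m, (a j) x
          = T • ∑ j ∈ Finset.Ico n m, (a j) (x / T) := by
        rw [Finset.smul_sum]
        exact Finset.sum_congr rfl fun j _ => hterm j
      have hxT : x / (T : ℝ) ∈ Icc (-1 : ℝ) 1 := by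
        have habs : |x / (T : ℝ)| ≤ 1 := by
          rw [abs_div, abs_of_nonneg (by positivity : (0:ℝ) ≤ (T:ℝ)),
            div_le_one (by positivity)]
          exact hxr
        exact abs_le.1 habs
      have hsumW : ∑ j ∈ Finset.Ico n m, (a j) (x / T) ∈ Wseq n := by
        rw [Finset.sum_Ico_eq_sum_range]
        apply tailsum (m - n) n
        intro j hj
        have h := ha (n + j) (x / T) hxT
        rwa [show n + j + 1 = n + (j : ℕ) + 1 by omega] at h
      have hQmem : ∑ j ∈ Finset.Ico n m, (a j) (x / T) ∈ Q N := by
        apply hQ.antitone (show N ≤ n by omega)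
        obtain ⟨n', rfl⟩ : ∃ n', n = n' + 1 := ⟨n - 1, by omega⟩
        exact hWQ n' hsumW
      rw [hdiff, hsmul]
      exact hQN hQmem
    intro m hm n hn
    intro x hx
    apply hW₁V
    show (Ssum n) x + -(Ssum m) x ∈ W₁
    rw [← sub_eq_add_neg]
    rcases le_total n m with h | h
    · have h1 := key m n hn h x hx
      have h2 : (Ssum n) x - (Ssum m) x = -((Ssum m) x - (Ssum n) x) := by abel
      rw [h2]
      exact Set.mem_neg.1 (by simpa using h1.2)
    · exact (key n m hm h x hx).1
  -- completeness: the limit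
  obtain ⟨Flim, hFlim⟩ := cauchySeq_tendsto_of_complete hcauchy
  have heval : ∀ x : ℝ, Tendsto (fun n => (Ssum n) x) atTop (𝓝 (Flim x)) := by
    intro x
    exact ((continuous_eval_const x).continuousAt.tendsto).comp hFlim
  have hadd : ∀ x y' : ℝ, Flim (x + y') = Flim x + Flim y' := by
    intro x y'
    refine tendsto_nhds_unique (heval (x + y')) ?_
    have h1 : (fun n => (Ssum n) (x + y')) = fun n => (Ssum n) x + (Ssum n) y' :=
      funext fun n => map_add (Ssum n) x y'
    rw [h1]
    exact (heval x).add (heval y')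
  set F : ContinuousAddMonoidHom ℝ G := ⟨AddMonoidHom.mk' ⇑Flim hadd, Flim.continuous⟩ with hFdef
  have hFB : F ∈ BB G W₀ := by
    intro t ht
    have h1 : ∀ n, (Ssum n) t ∈ Wseq 0 := by
      intro n
      rw [hSval]
      apply tailsum n 0
      intro j hj
      have h := ha j t ht
      rwa [show (0 : ℕ) + j + 1 = j + 1 by omega]
    have h2 : Flim t ∈ V₀ := hV₀c.mem_of_tendsto (heval t) (Filter.Eventually.of_forall h1)
    exact hV₀sub h2
  have hF1 : e F = y := by
    have h1 : Tendsto (fun n => (Ssum n) 1) atTop (𝓝 y) := by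
      have h2 : (fun n => (Ssum n) (1 : ℝ)) = fun n => y - rseq n := funext hSy
      rw [h2]
      simpa using tendsto_const_nhds.sub rtend
    exact tendsto_nhds_unique (heval 1) h1
  exact ⟨F, hBW₀ hFB, hF1⟩

end ExpOpenAux


/-- For a compact connected metrizable abelian group `G`, the exponential map
`exp_G : L(G) → G`, `f ↦ f 1`, is surjective iff it is open. -/
theorem expMap_surjective_iff_isOpenMap
    (G : Type*) [AddCommGroup G] [TopologicalSpace G] [IsTopologicalAddGroup G]
    [CompactSpace G] [T2Space G] [ConnectedSpace G]
    [TopologicalSpace.MetrizableSpace G] :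
    Function.Surjective (fun f : ContinuousAddMonoidHom ℝ G => f 1) ↔
      IsOpenMap (fun f : ContinuousAddMonoidHom ℝ G => f 1) := by
  constructor
  · -- surjective → open
    intro hsurj O hO
    rw [isOpen_iff_mem_nhds]
    rintro y ⟨f₀, hf₀, rfl⟩
    have h1 : (fun g : ContinuousAddMonoidHom ℝ G => g - f₀) '' O ∈
        𝓝 (0 : ContinuousAddMonoidHom ℝ G) := by
      have hIO : IsOpen ((fun g : ContinuousAddMonoidHom ℝ G => g - f₀) '' O) :=
        (isOpenMap_sub_right f₀) O hO
      exact hIO.mem_nhds ⟨f₀, hf₀, sub_self f₀⟩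
    have h2 := ExpOpenAux.openAt0 hsurj h1
    have h3 : (fun f : ContinuousAddMonoidHom ℝ G => f 1) '' O =
        (fun x => x + f₀ 1) '' ((fun f : ContinuousAddMonoidHom ℝ G => f 1) ''
          ((fun g : ContinuousAddMonoidHom ℝ G => g - f₀) '' O)) := by
      rw [← Set.image_comp, ← Set.image_comp]
      apply Set.image_congr
      intro g _
      show g 1 = (g - f₀) 1 + f₀ 1
      have : (g - f₀) 1 = g 1 - f₀ 1 := (ExpOpenAux.ev (G := G) 1).map_sub g f₀
      rw [this]; abel
    rw [h3]
    have h4 := (isOpenMap_add_right (f₀ 1)).image_mem_nhds h2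
    rwa [zero_add] at h4
  · -- open → surjective
    intro hopen y
    set E : ContinuousAddMonoidHom ℝ G →+ G := ExpOpenAux.ev (G := G) 1 with hE
    have hro : IsOpen (E.range : Set G) := by
      have : (E.range : Set G) = Set.range fun f : ContinuousAddMonoidHom ℝ G => f 1 := by
        ext x; simp [hE, ExpOpenAux.ev, AddMonoidHom.mem_range]; rfl
      rw [this]
      exact hopen.isOpen_range
    have hrc : IsClosed (E.range : Set G) := E.range.isClosed_of_isOpen hro
    have huniv : (E.range : Set G) = Set.univ :=
      IsClopen.eq_univ ⟨hrc, hro⟩ ⟨0, ⟨0, rfl⟩⟩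
    have : y ∈ (E.range : Set G) := huniv ▸ Set.mem_univ y
    rcases this with ⟨f, hf⟩
    exact ⟨f, hf⟩
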